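/- Assume char k ≠ 2. If P is antisymmetric (σ·P = sign(σ)·P for all σ ∈ S_n) and m-quasi-invariant, then P = K·∏_{i<j}(x_i - x_j)^{2m+1} for some symmetric polynomial K. Conversely, for every symmetric polynomial K, the polynomial K·∏_{i<j}(x_i - x_j)^{2m+1} is antisymmetric and m-quasi-invariant. -/

import Mathlib

open MvPolynomial

/-- `P` is `m`-quasi-invariant. -/
def QuasiInvariant (k : Type*) [Field k] (n m : ℕ) (P : MvPolynomial (Fin n) k) : Prop :=
  ∀ i j : Fin n, i ≠ j →
    (X i - X j) ^ (2 * m + 1) ∣ P - rename (Equiv.swap i j) P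

/-- The product `∏_{i<j} (x_i - x_j)^(2m+1)`. -/
noncomputable def discPow (k : Type*) [Field k] (n m : ℕ) : MvPolynomial (Fin n) k :=
  ∏ p ∈ Finset.univ.filter (fun p : Fin n × Fin n => p.1 < p.2),
    (X p.1 - X p.2) ^ (2 * m + 1)

section Aux

variable {k : Type*} [Field k] {n m : ℕ}

private lemma prime_XsubX {i j : Fin n} (h : i ≠ j) :
    Prime (X i - X j : MvPolynomial (Fin n) k) := by
  let φ := (renameEquiv k (Equiv.optionSubtypeNe i).symm).trans
      (optionEquivLeft k {b : Fin n // b ≠ i})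
  rw [← MulEquiv.prime_iff φ.toRingEquiv.toMulEquiv]
  have hφ : φ.toRingEquiv.toMulEquiv (X i - X j)
      = Polynomial.X - Polynomial.C (X ⟨j, h.symm⟩ : MvPolynomial {b : Fin n // b ≠ i} k) := by
    show φ (X i - X j) = _
    rw [map_sub]
    simp [φ, Equiv.optionSubtypeNe_symm_self, Equiv.optionSubtypeNe_symm_of_ne h.symm,
      optionEquivLeft_X_none, optionEquivLeft_X_some]
  rw [hφ]
  exact Polynomial.prime_X_sub_C _

private lemma not_dvd_XsubX {i j a b : Fin n} (hab : a ≠ b)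
    (h : (a ≠ i ∧ a ≠ j) ∨ (b ≠ i ∧ b ≠ j)) :
    ¬ (X i - X j : MvPolynomial (Fin n) k) ∣ (X a - X b) := by
  intro hd
  rcases h with ⟨h1, h2⟩ | ⟨h1, h2⟩
  · have := (eval (fun t => if t = a then (1:k) else 0)).map_dvd hd
    simp [h1.symm, h2.symm, hab, hab.symm] at this
  · have := (eval (fun t => if t = b then (1:k) else 0)).map_dvd hd
    simp [h1.symm, h2.symm, hab, hab.symm] at this

private lemma discPow_dvd {P : MvPolynomial (Fin n) k}
    (h : ∀ i j : Fin n, i ≠ j → (X i - X j) ^ (2 * m + 1) ∣ P) :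
    discPow k n m ∣ P := by
  classical
  unfold discPow
  have main : ∀ s : Finset (Fin n × Fin n),
      s ⊆ Finset.univ.filter (fun p : Fin n × Fin n => p.1 < p.2) →
      (∏ p ∈ s, (X p.1 - X p.2 : MvPolynomial (Fin n) k) ^ (2 * m + 1)) ∣ P := by
    intro s
    induction s using Finset.induction_on with
    | empty => intro _; simpa using one_dvd P
    | @insert q s hq ih =>
      intro hsub
      have hqmem : q.1 < q.2 := by
        have := hsub (Finset.mem_insert_self q s); simpa using this
      have hsubs : s ⊆ _ := fun x hx => hsub (Finset.mem_insert_of_mem hx)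
      obtain ⟨R, hR⟩ := ih hsubs
      have hp : Prime (X q.1 - X q.2 : MvPolynomial (Fin n) k) := prime_XsubX hqmem.ne
      have hnd : ¬ (X q.1 - X q.2 : MvPolynomial (Fin n) k) ∣
          ∏ p ∈ s, (X p.1 - X p.2) ^ (2 * m + 1) := by
        intro hdvd
        obtain ⟨r, hrs, hr⟩ := hp.exists_mem_finset_dvd hdvd
        have hrlt : r.1 < r.2 := by have := hsubs hrs; simpa using this
        have hrq : r ≠ q := fun e => hq (e ▸ hrs)
        have hdr : (X q.1 - X q.2 : MvPolynomial (Fin n) k) ∣ (X r.1 - X r.2) :=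
          hp.dvd_of_dvd_pow hr
        refine not_dvd_XsubX hrlt.ne ?_ hdr
        by_contra hc
        push_neg at hc
        obtain ⟨hc1, hc2⟩ := hc
        have e1 : r.1 = q.1 ∨ r.1 = q.2 := or_iff_not_imp_left.mpr hc1
        have e2 : r.2 = q.1 ∨ r.2 = q.2 := or_iff_not_imp_left.mpr hc2
        apply hrq
        rcases e1 with e1 | e1 <;> rcases e2 with e2 | e2
        · rw [e1, e2] at hrlt; exact absurd hrlt (lt_irrefl _)
        · exact Prod.ext e1 e2
        · rw [e1, e2] at hrlt; exact absurd hrlt (asymm hqmem)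
        · rw [e1, e2] at hrlt; exact absurd hrlt (lt_irrefl _)
      have hq2 : (X q.1 - X q.2 : MvPolynomial (Fin n) k) ^ (2 * m + 1) ∣
          (∏ p ∈ s, (X p.1 - X p.2) ^ (2 * m + 1)) * R := hR ▸ h q.1 q.2 hqmem.ne
      obtain ⟨R', hR'⟩ := hp.pow_dvd_of_dvd_mul_left (2 * m + 1) hnd hq2
      rw [Finset.prod_insert hq]
      exact ⟨R', by rw [hR, hR', mul_assoc, mul_left_comm]⟩
  exact main _ (le_refl _)

private lemma prod_pairs_eq (f : Fin n → Fin n → MvPolynomial (Fin n) k) :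
    ∏ p ∈ Finset.univ.filter (fun p : Fin n × Fin n => p.1 < p.2), f p.1 p.2
      = ∏ i : Fin n, ∏ j ∈ Finset.Ioi i, f i j := by
  rw [Finset.prod_filter, Fintype.prod_prod_type]
  refine Finset.prod_congr rfl fun i _ => ?_
  have : Finset.Ioi i = Finset.univ.filter (fun j => i < j) := by ext; simp
  rw [this, Finset.prod_filter]

private lemma vandermonde_pow (e : ℕ) (he : Odd e) :
    (Matrix.vandermonde (X : Fin n → MvPolynomial (Fin n) k)).det ^ e
      = (-1 : MvPolynomial (Fin n) k) ^
          (Finset.univ.filter (fun p : Fin n × Fin n => p.1 < p.2)).card *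
        ∏ p ∈ Finset.univ.filter (fun p : Fin n × Fin n => p.1 < p.2), (X p.1 - X p.2) ^ e := by
  rw [Matrix.det_vandermonde, ← prod_pairs_eq (fun i j => X j - X i), ← Finset.prod_pow,
    ← Finset.prod_const, ← Finset.prod_mul_distrib]
  refine Finset.prod_congr rfl fun p _ => ?_
  rw [← neg_sub, he.neg_pow, neg_one_mul]

private lemma rename_vandermonde (σ : Equiv.Perm (Fin n)) :
    rename σ (Matrix.vandermonde (X : Fin n → MvPolynomial (Fin n) k)).det
      = ((Equiv.Perm.sign σ : ℤ) : MvPolynomial (Fin n) k) *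
        (Matrix.vandermonde (X : Fin n → MvPolynomial (Fin n) k)).det := by
  rw [AlgHom.map_det, AlgHom.mapMatrix_apply]
  have : (Matrix.vandermonde (X : Fin n → MvPolynomial (Fin n) k)).map (rename σ)
      = (Matrix.vandermonde (X : Fin n → MvPolynomial (Fin n) k)).submatrix σ id := by
    ext i j; simp [Matrix.vandermonde]
  rw [this, Matrix.det_permute]

private lemma rename_discPow' (σ : Equiv.Perm (Fin n)) :
    rename σ (∏ p ∈ Finset.univ.filter (fun p : Fin n × Fin n => p.1 < p.2),
        (X p.1 - X p.2 : MvPolynomial (Fin n) k) ^ (2 * m + 1))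
      = ((Equiv.Perm.sign σ : ℤ) : MvPolynomial (Fin n) k) *
        ∏ p ∈ Finset.univ.filter (fun p : Fin n × Fin n => p.1 < p.2),
          (X p.1 - X p.2) ^ (2 * m + 1) := by
  set D := ∏ p ∈ Finset.univ.filter (fun p : Fin n × Fin n => p.1 < p.2),
      (X p.1 - X p.2 : MvPolynomial (Fin n) k) ^ (2 * m + 1) with hD
  set N := (Finset.univ.filter (fun p : Fin n × Fin n => p.1 < p.2)).card
  have hV := vandermonde_pow (k := k) (n := n) (2 * m + 1) (odd_two_mul_add_one m)
  rw [← hD] at hV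
  have key : ((-1 : MvPolynomial (Fin n) k) ^ N) * rename σ D
      = ((Equiv.Perm.sign σ : ℤ) : MvPolynomial (Fin n) k) * (((-1) ^ N) * D) := by
    have : rename σ ((-1 : MvPolynomial (Fin n) k) ^ N * D)
        = ((-1 : MvPolynomial (Fin n) k) ^ N) * rename σ D := by
      rw [map_mul, map_pow, map_neg, map_one]
    rw [← this, ← hV, map_pow, rename_vandermonde, mul_pow, hV]
    congr 1
    rcases Int.units_eq_one_or (Equiv.Perm.sign σ) with hs | hs <;>
      rw [hs] <;> push_cast <;> ring_nf <;>
      simp [Odd.neg_pow (odd_two_mul_add_one m)]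
  have hne : ((-1 : MvPolynomial (Fin n) k) ^ N) ≠ 0 :=
    pow_ne_zero _ (neg_ne_zero.mpr one_ne_zero)
  apply mul_left_cancel₀ hne
  rw [key]; ring

private lemma rename_discPow (σ : Equiv.Perm (Fin n)) :
    rename σ (discPow k n m)
      = ((Equiv.Perm.sign σ : ℤ) : MvPolynomial (Fin n) k) * discPow k n m := by
  unfold discPow
  exact rename_discPow' σ

private lemma factor_dvd_discPow {i j : Fin n} (h : i ≠ j) :
    (X i - X j : MvPolynomial (Fin n) k) ^ (2 * m + 1) ∣ discPow k n m := by
  unfold discPow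
  rcases h.lt_or_gt with hlt | hlt
  · exact Finset.dvd_prod_of_mem (fun p : Fin n × Fin n => (X p.1 - X p.2) ^ (2 * m + 1))
      (a := (i, j)) (by simp [hlt])
  · have h1 : (X j - X i : MvPolynomial (Fin n) k) ^ (2 * m + 1) ∣
        ∏ p ∈ Finset.univ.filter (fun p : Fin n × Fin n => p.1 < p.2),
          (X p.1 - X p.2) ^ (2 * m + 1) :=
      Finset.dvd_prod_of_mem (fun p : Fin n × Fin n => (X p.1 - X p.2) ^ (2 * m + 1))
        (a := (j, i)) (by simp [hlt])
    have h2 : (X i - X j : MvPolynomial (Fin n) k) ^ (2 * m + 1)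
        = -((X j - X i) ^ (2 * m + 1)) := by
      rw [← (odd_two_mul_add_one m).neg_pow, neg_sub]
    rw [h2, neg_dvd]
    exact h1

private lemma discPow_ne_zero : discPow k n m ≠ 0 := by
  unfold discPow
  rw [Finset.prod_ne_zero_iff]
  intro p hp
  have : p.1 < p.2 := by simpa using hp
  exact pow_ne_zero _ (prime_XsubX this.ne).ne_zero

end Aux

theorem antisymmetric_quasiInvariant_iff (k : Type*) [Field k]
    (hk : ringChar k ≠ 2) (n m : ℕ) :
    (∀ P : MvPolynomial (Fin n) k, QuasiInvariant k n m P →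
      (∀ σ : Equiv.Perm (Fin n), rename σ P = (Equiv.Perm.sign σ : ℤ) • P) →
      ∃ K : MvPolynomial (Fin n) k, K.IsSymmetric ∧ P = K * discPow k n m) ∧
    (∀ K : MvPolynomial (Fin n) k, K.IsSymmetric →
      QuasiInvariant k n m (K * discPow k n m) ∧
      (∀ σ : Equiv.Perm (Fin n),
        rename σ (K * discPow k n m) = (Equiv.Perm.sign σ : ℤ) • (K * discPow k n m))) := by
  have h2 : (2 : k) ≠ 0 := Ring.two_ne_zero hk
  constructor
  · intro P hQI hA
    have hdvd : ∀ i j : Fin n, i ≠ j → (X i - X j) ^ (2 * m + 1) ∣ P := by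
      intro i j hij
      have hd := hQI i j hij
      rw [hA (Equiv.swap i j), Equiv.Perm.sign_swap hij] at hd
      simp only [Units.val_neg, Units.val_one, neg_one_zsmul, sub_neg_eq_add] at hd
      have hd2 : (X i - X j : MvPolynomial (Fin n) k) ^ (2 * m + 1) ∣ C (2:k) * P := by
        have : C (2:k) * P = P + P := by rw [map_ofNat, two_mul]
        rwa [this]
      obtain ⟨R, hR⟩ := hd2
      refine ⟨C (2⁻¹ : k) * R, ?_⟩
      rw [mul_left_comm, ← hR, ← mul_assoc, ← C_mul, inv_mul_cancel₀ h2, C_1, one_mul]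
    obtain ⟨K, hKdef⟩ := discPow_dvd hdvd
    refine ⟨K, ?_, by rw [hKdef, mul_comm]⟩
    intro σ
    have hD0 : discPow k n m ≠ 0 := discPow_ne_zero
    have h := hA σ
    rw [hKdef, map_mul, rename_discPow] at h
    apply mul_left_cancel₀ hD0
    rcases Int.units_eq_one_or (Equiv.Perm.sign σ) with hs | hs <;> rw [hs] at h <;>
      simp only [Units.val_one, Units.val_neg, Int.cast_one, Int.cast_neg, one_mul, one_smul,
        one_zsmul, neg_one_zsmul, neg_mul, neg_inj, mul_neg] at h <;>
      exact h
  · intro K hK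
    have hAnti : ∀ σ : Equiv.Perm (Fin n),
        rename σ (K * discPow k n m) = (Equiv.Perm.sign σ : ℤ) • (K * discPow k n m) := by
      intro σ
      rw [map_mul, hK σ, rename_discPow]
      rcases Int.units_eq_one_or (Equiv.Perm.sign σ) with hs | hs <;> rw [hs] <;>
        simp only [Units.val_one, Units.val_neg, Int.cast_one, Int.cast_neg, one_mul, one_smul,
          one_zsmul, neg_one_zsmul, neg_mul, mul_neg]
    refine ⟨?_, hAnti⟩
    intro i j hij
    rw [hAnti (Equiv.swap i j), Equiv.Perm.sign_swap hij]
    simp only [Units.val_neg, Units.val_one, neg_one_zsmul, sub_neg_eq_add]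
    have hf : (X i - X j : MvPolynomial (Fin n) k) ^ (2 * m + 1) ∣ K * discPow k n m :=
      (factor_dvd_discPow hij).mul_left K
    exact dvd_add hf hf
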